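/- Let q be a prime power, h ≥ 2, K ≥ 2, and let ⟨v_1⟩_{F_{q^h}}, …, ⟨v_N⟩_{F_{q^h}} be N pairwise distinct one-dimensional F_{q^h}-subspaces of F_{q^h}^K (v_i nonzero) whose union is an F_q-vectorial strong blocking set. Then N ≥ max{ min{ 2K + ⌊(K−2)/(h−1)⌋, q+1 }, 2K−1 }. -/

import Mathlib

open Module Submodule

namespace SBSAux4

variable {Fq FL : Type} [Field Fq] [Field FL] [Algebra Fq FL]
variable {K N h : ℕ}

noncomputable def pairL (a : Fin K → FL) : (Fin K → FL) →ₗ[FL] FL where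
  toFun x := ∑ j, a j * x j
  map_add' x y := by simp [mul_add, Finset.sum_add_distrib]
  map_smul' c x := by
    simp only [Pi.smul_apply, smul_eq_mul, RingHom.id_apply, Finset.mul_sum]
    exact Finset.sum_congr rfl fun j _ => by ring

lemma pairL_apply (a x : Fin K → FL) : pairL a x = ∑ j, a j * x j := rfl

lemma pairL_comm (a x : Fin K → FL) : pairL a x = pairL x a := by
  rw [pairL_apply, pairL_apply]
  exact Finset.sum_congr rfl fun j _ => mul_comm _ _

lemma pairL_add_left (a a' x : Fin K → FL) :
    pairL (a + a') x = pairL a x + pairL a' x := by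
  rw [pairL_comm, map_add, pairL_comm x a, pairL_comm x a']

lemma pairL_smulFq_left (c : Fq) (a x : Fin K → FL) :
    pairL (c • a) x = c • pairL a x := by
  rw [pairL_comm, LinearMap.map_smul_of_tower, pairL_comm]

lemma pairL_surj {a : Fin K → FL} (ha : a ≠ 0) : Function.Surjective (pairL a) := by
  obtain ⟨j, hj⟩ : ∃ j, a j ≠ 0 := by
    by_contra hc; push_neg at hc; exact ha (funext hc)
  intro y
  refine ⟨Pi.single j ((a j)⁻¹ * y), ?_⟩
  rw [pairL_apply, Finset.sum_eq_single_of_mem j (Finset.mem_univ j)]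
  · rw [Pi.single_eq_same]; field_simp
  · intro j' _ hne; rw [Pi.single_eq_of_ne hne, mul_zero]

lemma pairL_repr (φ : (Fin K → FL) →ₗ[FL] FL) (x : Fin K → FL) :
    φ x = pairL (fun j => φ (Pi.single j 1)) x := by
  have hx : x = ∑ j, x j • (Pi.single j (1 : FL) : Fin K → FL) := by
    conv_lhs => rw [← Finset.univ_sum_single x]
    exact Finset.sum_congr rfl fun j _ => by
      rw [← Pi.single_smul, smul_eq_mul, mul_one]
  conv_lhs => rw [hx]
  rw [map_sum, pairL_apply]
  exact Finset.sum_congr rfl fun j _ => by rw [map_smul, smul_eq_mul, mul_comm]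

lemma exists_orth (U : Submodule FL (Fin K → FL)) (hU : U ≠ ⊤) :
    ∃ b : Fin K → FL, b ≠ 0 ∧ ∀ x ∈ U, pairL b x = 0 := by
  obtain ⟨f, hf, hmap⟩ :=
    U.exists_dual_map_eq_bot_of_lt_top (lt_top_iff_ne_top.mpr hU) inferInstance
  refine ⟨fun j => f (Pi.single j 1), ?_, ?_⟩
  · intro hb0
    obtain ⟨x, hx⟩ := DFunLike.ne_iff.mp hf
    apply hx
    rw [pairL_repr f x, hb0]
    simp [pairL_apply]
  · intro x hx
    rw [← pairL_repr f x]
    have : f x ∈ U.map f := Submodule.mem_map_of_mem hx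
    rw [hmap] at this
    simpa using this

lemma avoid_union {q : ℕ} [Fintype Fq] (hq : 1 < q) (hcard : Fintype.card Fq = q)
    {P : Type} [AddCommGroup P] [Module Fq P] [Finite P]
    {ι : Type} (T : Finset ι) (Z : ι → Submodule Fq P)
    (hZ : ∀ t ∈ T, Z t ≠ ⊤) (hT : T.card ≤ q) :
    ∃ a : P, ∀ t ∈ T, a ∉ Z t := by
  classical
  rcases Finset.eq_empty_or_nonempty T with hTn | ⟨t₀, ht₀⟩
  · exact ⟨0, by simp [hTn]⟩
  by_contra hcon
  push_neg at hcon
  haveI : Fintype P := Fintype.ofFinite P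
  obtain ⟨x₀, hx₀⟩ : ∃ x : P, x ∉ Z t₀ := by
    by_contra hall; push_neg at hall
    exact hZ t₀ ht₀ (eq_top_iff.mpr fun x _ => hall x)
  haveI : Nontrivial P := ⟨⟨x₀, 0, fun hh => hx₀ (hh ▸ (Z t₀).zero_mem)⟩⟩
  set d := finrank Fq P with hd
  have hd1 : 1 ≤ d := Module.finrank_pos
  have hcardP : Fintype.card P = q ^ d := by rw [← hcard]; exact card_eq_pow_finrank
  have hsub : ∀ t ∈ T, (Z t : Set P).toFinset.card ≤ q ^ (d - 1) := by
    intro t ht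
    have h1 : finrank Fq (Z t) < d := Submodule.finrank_lt (hZ t ht)
    have h2 : (Z t : Set P).toFinset.card = Fintype.card (Z t) := Set.toFinset_card _
    have h3 : Fintype.card (Z t) = q ^ finrank Fq (Z t) := by
      rw [← hcard]; exact card_eq_pow_finrank
    rw [h2, h3]
    exact Nat.pow_le_pow_right (by omega) (by omega)
  have hcover : (Finset.univ : Finset P) ⊆
      insert (0 : P) (T.biUnion fun t => ((Z t : Set P).toFinset.erase 0)) := by
    intro a _
    obtain ⟨t, ht, hat⟩ := hcon a
    by_cases ha0 : a = 0
    · simp [ha0]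
    · exact Finset.mem_insert_of_mem (Finset.mem_biUnion.mpr
        ⟨t, ht, Finset.mem_erase.mpr ⟨ha0, Set.mem_toFinset.mpr hat⟩⟩)
  have hle := Finset.card_le_card hcover
  rw [Finset.card_univ, hcardP] at hle
  have hbound : (insert (0 : P) (T.biUnion fun t => ((Z t : Set P).toFinset.erase 0))).card
      ≤ 1 + q * (q ^ (d - 1) - 1) := by
    calc (insert (0 : P) (T.biUnion fun t => ((Z t : Set P).toFinset.erase 0))).card
        ≤ (T.biUnion fun t => ((Z t : Set P).toFinset.erase 0)).card + 1 :=
          Finset.card_insert_le _ _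
      _ ≤ (∑ t ∈ T, ((Z t : Set P).toFinset.erase 0).card) + 1 := by
          gcongr
          exact Finset.card_biUnion_le
      _ ≤ (∑ _t ∈ T, (q ^ (d - 1) - 1)) + 1 := by
          gcongr with t ht
          have h1 := hsub t ht
          have h2 : ((Z t : Set P).toFinset.erase 0).card = (Z t : Set P).toFinset.card - 1 :=
            Finset.card_erase_of_mem (Set.mem_toFinset.mpr (Z t).zero_mem)
          omega
      _ = T.card * (q ^ (d - 1) - 1) + 1 := by rw [Finset.sum_const, smul_eq_mul]
      _ ≤ q * (q ^ (d - 1) - 1) + 1 := by gcongr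
      _ = 1 + q * (q ^ (d - 1) - 1) := by omega
  have hA : 1 ≤ q ^ (d - 1) := Nat.one_le_pow _ _ (by omega)
  obtain ⟨A', hA'⟩ : ∃ A', q ^ (d - 1) = A' + 1 := ⟨q ^ (d-1) - 1, by omega⟩
  have hqd : q ^ d = q * q ^ (d - 1) := by
    conv_lhs => rw [show d = (d - 1) + 1 by omega]
    rw [pow_succ]; ring
  rw [hA'] at hbound hqd
  rw [hqd] at hle
  have hmul : q * (A' + 1) = q * A' + q := by ring
  simp only [Nat.add_sub_cancel] at hbound
  rw [hmul] at hle
  omega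

lemma dual_key [Fintype FL]
    (v : Fin N → (Fin K → FL))
    (hSBS : ∀ H : Submodule Fq (Fin K → FL), Module.finrank Fq H = K * h - 1 →
      Submodule.span Fq ((⋃ i, (Submodule.span FL {v i} : Set (Fin K → FL)))
        ∩ (H : Set (Fin K → FL))) = H)
    (hdim : finrank Fq (Fin K → FL) = K * h)
    (lam : FL →ₗ[Fq] Fq) (hlam : lam ≠ 0)
    (a b : Fin K → FL) (ha : a ≠ 0) (c : Fin N → Fq)
    (hc : ∀ i, pairL b (v i) = c i • pairL a (v i)) :
    ∃ c₀ : Fq, b = c₀ • a := by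
  classical
  set f : (Fin K → FL) →ₗ[Fq] Fq := lam ∘ₗ ((pairL a).restrictScalars Fq) with hf
  set g : (Fin K → FL) →ₗ[Fq] Fq := lam ∘ₗ ((pairL b).restrictScalars Fq) with hg
  obtain ⟨x₁, hx₁⟩ : ∃ x, f x ≠ 0 := by
    obtain ⟨z, hz⟩ := DFunLike.ne_iff.mp hlam
    obtain ⟨x, hx⟩ := pairL_surj ha z
    refine ⟨x, ?_⟩
    have : f x = lam (pairL a x) := rfl
    rw [this, hx]
    simpa using hz
  have hfsurj : Function.Surjective f := by
    intro y
    refine ⟨(y * (f x₁)⁻¹) • x₁, ?_⟩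
    rw [map_smul, smul_eq_mul]
    field_simp
  have hker : finrank Fq (LinearMap.ker f) = K * h - 1 := by
    have h1 := LinearMap.finrank_range_add_finrank_ker f
    rw [hdim, LinearMap.range_eq_top.mpr hfsurj, finrank_top, Module.finrank_self] at h1
    omega
  have hspan := hSBS (LinearMap.ker f) hker
  have hsub : LinearMap.ker f ≤ LinearMap.ker g := by
    rw [← hspan]
    apply Submodule.span_le.mpr
    rintro x ⟨hx1, hx2⟩
    obtain ⟨_, ⟨i, rfl⟩, hxi⟩ := hx1
    obtain ⟨d, rfl⟩ := Submodule.mem_span_singleton.mp hxi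
    have hfx : lam (pairL a (d • v i)) = 0 := by
      have : d • v i ∈ LinearMap.ker f := hx2
      exact LinearMap.mem_ker.mp this
    have hpb : pairL b (d • v i) = c i • pairL a (d • v i) := by
      rw [map_smul, map_smul, hc i, smul_comm]
    show g (d • v i) = 0
    have : g (d • v i) = lam (pairL b (d • v i)) := rfl
    rw [this, hpb, map_smul, hfx, smul_zero]
  set x₀ := (f x₁)⁻¹ • x₁ with hx₀def
  have hfx₀ : f x₀ = 1 := by rw [map_smul, smul_eq_mul]; field_simp
  refine ⟨g x₀, ?_⟩
  have hgf : ∀ x, g x = f x * g x₀ := by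
    intro x
    have hmem : x - f x • x₀ ∈ LinearMap.ker f := by
      rw [LinearMap.mem_ker, map_sub, map_smul, hfx₀, smul_eq_mul, mul_one, sub_self]
    have hthis := hsub hmem
    rw [LinearMap.mem_ker, map_sub, map_smul, smul_eq_mul, sub_eq_zero] at hthis
    exact hthis
  by_contra hne
  have hw : b - g x₀ • a ≠ 0 := sub_ne_zero.mpr hne
  apply hlam
  ext y
  show lam y = 0
  obtain ⟨x, hx⟩ := pairL_surj hw y
  have hpb : pairL (b - g x₀ • a) x = pairL b x - g x₀ • pairL a x := by
    rw [pairL_comm, map_sub, LinearMap.map_smul_of_tower, pairL_comm x b, pairL_comm x a]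
  have hy : lam y = g x - g x₀ • f x := by
    rw [← hx, hpb, map_sub, map_smul]
    rfl
  rw [hy, hgf x, smul_eq_mul, mul_comm, sub_self]

lemma supp_span [Fintype FL] (hK : 2 ≤ K)
    (v : Fin N → (Fin K → FL))
    (hSBS : ∀ H : Submodule Fq (Fin K → FL), Module.finrank Fq H = K * h - 1 →
      Submodule.span Fq ((⋃ i, (Submodule.span FL {v i} : Set (Fin K → FL)))
        ∩ (H : Set (Fin K → FL))) = H)
    (hdim : finrank Fq (Fin K → FL) = K * h)
    (lam : FL →ₗ[Fq] Fq) (hlam : lam ≠ 0)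
    (b : Fin K → FL) (hb : b ≠ 0) :
    Submodule.span FL (v '' {i | pairL b (v i) ≠ 0}) = ⊤ := by
  classical
  by_contra hU
  by_cases hS : ∃ i, pairL b (v i) ≠ 0
  · obtain ⟨i₀, hi₀⟩ := hS
    obtain ⟨t₁, ht₁, horth⟩ := exists_orth _ hU
    have htv : ∀ i, pairL b (v i) ≠ 0 → pairL t₁ (v i) = 0 := fun i hi =>
      horth _ (Submodule.subset_span ⟨i, hi, rfl⟩)
    have hbt : b + t₁ ≠ 0 := by
      intro h0
      apply hi₀
      have h1 : pairL t₁ (v i₀) = 0 := htv i₀ hi₀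
      have h2 : t₁ = -b := (neg_eq_of_add_eq_zero_right h0).symm
      rw [h2, pairL_comm, map_neg, pairL_comm] at h1
      rwa [neg_eq_zero] at h1
    have hcfun : ∀ i, pairL b (v i) =
        (if pairL b (v i) ≠ 0 then (1:Fq) else 0) • pairL (b + t₁) (v i) := by
      intro i
      by_cases hi : pairL b (v i) ≠ 0
      · rw [if_pos hi, one_smul, pairL_add_left, htv i hi, add_zero]
      · rw [if_neg hi, zero_smul]
        push_neg at hi
        exact hi
    obtain ⟨c₀, hc₀⟩ := dual_key v hSBS hdim lam hlam (b + t₁) b hbt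
      (fun i => if pairL b (v i) ≠ 0 then 1 else 0) hcfun
    -- derive contradiction
    have hβ : pairL b (v i₀) = c₀ • pairL b (v i₀) := by
      conv_lhs => rw [hc₀]
      rw [pairL_smulFq_left, pairL_add_left, htv i₀ hi₀, add_zero]
    rw [Algebra.smul_def] at hβ
    have hone : algebraMap Fq FL c₀ = 1 :=
      mul_right_cancel₀ hi₀ (by rw [one_mul]; exact hβ.symm)
    apply ht₁
    have hbb : b = b + t₁ := by
      conv_lhs => rw [hc₀]
      funext j
      rw [Pi.smul_apply, Algebra.smul_def, hone, one_mul]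
    have := hbb.symm
    rwa [add_eq_left] at this
  · push_neg at hS
    set j0 : Fin K := ⟨0, by omega⟩ with hj0def
    set j1 : Fin K := ⟨1, by omega⟩ with hj1def
    have hne01 : j0 ≠ j1 := by
      intro hh
      have := congrArg Fin.val hh
      simp [hj0def, hj1def] at this
    have hsingle : ∀ j : Fin K, (Pi.single j (1:FL) : Fin K → FL) ≠ 0 := by
      intro j h0
      have := congrFun h0 j
      rw [Pi.single_eq_same] at this
      exact one_ne_zero this
    obtain ⟨c₀, hc₀⟩ := dual_key v hSBS hdim lam hlam (Pi.single j0 (1:FL)) b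
      (hsingle j0) (fun _ => 0) (fun i => by rw [zero_smul]; exact hS i)
    obtain ⟨c₁, hc₁⟩ := dual_key v hSBS hdim lam hlam (Pi.single j1 (1:FL)) b
      (hsingle j1) (fun _ => 0) (fun i => by rw [zero_smul]; exact hS i)
    have h1 : b j1 = 0 := by
      rw [hc₀]
      rw [Pi.smul_apply, Pi.single_eq_of_ne hne01.symm, smul_zero]
    have h2 : b j1 = c₁ • (1 : FL) := by
      rw [hc₁, Pi.smul_apply, Pi.single_eq_same]
    rw [h1] at h2
    have hc10 : c₁ = 0 := by
      rcases smul_eq_zero.mp h2.symm with h | h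
      · exact h
      · exact absurd h one_ne_zero
    apply hb
    rw [hc₁, hc10, zero_smul]

end SBSAux4

open SBSAux4

set_option maxHeartbeats 1000000 in
set_option synthInstance.maxHeartbeats 400000 in
/-- Lower bound on the size of an outer strong blocking set: if the union of `N` pairwise
distinct one-dimensional `F_{q^h}`-subspaces of `F_{q^h}^K` is an `F_q`-vectorial strong
blocking set, then `N ≥ max (min (2K + ⌊(K-2)/(h-1)⌋) (q+1)) (2K-1)`. -/
theorem stmt_8 (q h K N : ℕ) (hq : IsPrimePow q) (hh : 2 ≤ h) (hK : 2 ≤ K)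
    (Fq FL : Type) [Field Fq] [Field FL] [Algebra Fq FL] [Fintype Fq] [Fintype FL]
    (hcard_q : Fintype.card Fq = q) (hcard_L : Fintype.card FL = q ^ h)
    (v : Fin N → (Fin K → FL)) (hv : ∀ i, v i ≠ 0)
    (hdistinct : ∀ i j : Fin N, i ≠ j →
      (Submodule.span FL {v i} : Submodule FL (Fin K → FL)) ≠ Submodule.span FL {v j})
    (hSBS : ∀ H : Submodule Fq (Fin K → FL), Module.finrank Fq H = K * h - 1 →
      Submodule.span Fq ((⋃ i, (Submodule.span FL {v i} : Set (Fin K → FL)))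
        ∩ (H : Set (Fin K → FL))) = H) :
    max (min (2 * K + (K - 2) / (h - 1)) (q + 1)) (2 * K - 1) ≤ N := by
  classical
  have hq1 : 1 < q := hq.one_lt
  have hfrL : finrank Fq FL = h := by
    have hc : Fintype.card FL = q ^ finrank Fq FL := by
      rw [← hcard_q]; exact card_eq_pow_finrank
    rw [hcard_L] at hc
    exact (Nat.pow_right_injective (by omega) hc.symm)
  have hdim : finrank Fq (Fin K → FL) = K * h := by
    rw [Module.finrank_pi_fintype Fq]
    simp [hfrL]
  -- a nonzero Fq-linear functional on FL
  obtain ⟨lam, hlam⟩ : ∃ lam : FL →ₗ[Fq] Fq, lam ≠ 0 := by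
    set B := Module.finBasis Fq FL
    have hpos : 0 < finrank Fq FL := by omega
    set i₀ : Fin (finrank Fq FL) := ⟨0, hpos⟩
    refine ⟨B.coord i₀, ?_⟩
    intro h0
    have h1 : B.coord i₀ (B i₀) = 1 := by simp
    rw [h0] at h1
    simp at h1
  -- spanning of range of v
  have hspan_all : Submodule.span FL (Set.range v) = ⊤ := by
    have hb0 : (Pi.single (⟨0, by omega⟩ : Fin K) (1 : FL) : Fin K → FL) ≠ 0 := by
      intro h0
      have := congrFun h0 ⟨0, by omega⟩
      rw [Pi.single_eq_same] at this
      exact one_ne_zero this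
    have hsup := supp_span hK v hSBS hdim lam hlam _ hb0
    rw [eq_top_iff, ← hsup]
    apply Submodule.span_mono
    rintro x ⟨i, _, rfl⟩
    exact ⟨i, rfl⟩
  -- a linearly independent spanning subset of the v's
  obtain ⟨s, hs_sub, hs_span, hs_ind⟩ := exists_linearIndependent FL (Set.range v)
  rw [hspan_all] at hs_span
  have hs_fin : s.Finite := hs_ind.setFinite
  haveI := hs_fin.fintype
  have hfrV : finrank FL (Fin K → FL) = K := by
    rw [Module.finrank_pi, Fintype.card_fin]
  have hs_card : s.toFinset.card = K := by
    have h1 : finrank FL (Submodule.span FL s) = s.toFinset.card :=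
      finrank_span_set_eq_card hs_ind
    rw [hs_span, finrank_top, hfrV] at h1
    exact h1.symm
  have hs_ne : s.toFinset.Nonempty := by
    rw [← Finset.card_pos, hs_card]; omega
  obtain ⟨x₀, hx₀⟩ := hs_ne
  set sF := s.toFinset.erase x₀ with hsF
  have hsF_card : sF.card = K - 1 := by
    rw [hsF, Finset.card_erase_of_mem hx₀, hs_card]
  set U' := Submodule.span FL ((sF : Set (Fin K → FL))) with hU'
  have hU'_ne : U' ≠ ⊤ := by
    intro htop
    have h1 : finrank FL (Submodule.span FL ((sF : Set (Fin K → FL)))) ≤ sF.card :=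
      finrank_span_finset_le_card sF
    rw [← hU', htop, finrank_top, hfrV, hsF_card] at h1
    omega
  obtain ⟨b, hb0, hborth⟩ := exists_orth U' hU'_ne
  -- index set S₂ of the sF vectors
  have hchoose : ∀ x ∈ sF, ∃ i : Fin N, v i = x := by
    intro x hx
    have hxs : x ∈ s := Set.mem_toFinset.mp ((Finset.mem_erase.mp hx).2)
    obtain ⟨i, hi⟩ := hs_sub hxs
    exact ⟨i, hi⟩
  set S₂ := sF.attach.image (fun x => (hchoose x.1 x.2).choose) with hS₂
  have hS₂_mem : ∀ i ∈ S₂, v i ∈ (sF : Set (Fin K → FL)) := by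
    intro i hi
    obtain ⟨x, _, rfl⟩ := Finset.mem_image.mp hi
    rw [(hchoose x.1 x.2).choose_spec]
    exact x.2
  have hS₂_card : S₂.card = K - 1 := by
    rw [hS₂]
    have hinj : Set.InjOn (fun x : {x // x ∈ sF} => (hchoose x.1 x.2).choose) sF.attach := by
      intro x _ y _ hxy
      dsimp only at hxy
      have hx := (hchoose x.1 x.2).choose_spec
      have hy := (hchoose y.1 y.2).choose_spec
      rw [hxy] at hx
      exact Subtype.ext (hx.symm.trans hy)
    rw [Finset.card_image_of_injOn hinj, Finset.card_attach, hsF_card]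
  -- index set S₁ of vectors not orthogonal to b
  set S₁ := Finset.univ.filter (fun i : Fin N => pairL b (v i) ≠ 0) with hS₁
  have hS₁_card : K ≤ S₁.card := by
    have hsup := supp_span hK v hSBS hdim lam hlam b hb0
    haveI : Fintype ↑(v '' {i | pairL b (v i) ≠ 0}) := Fintype.ofFinite _
    have h1 : finrank FL (Submodule.span FL (v '' {i | pairL b (v i) ≠ 0}))
        ≤ (v '' {i | pairL b (v i) ≠ 0}).toFinset.card := finrank_span_le_card _
    rw [hsup, finrank_top, hfrV] at h1
    refine le_trans h1 (le_trans (Finset.card_le_card ?_) (Finset.card_image_le (s := S₁) (f := v)))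
    intro x hx
    rw [Set.mem_toFinset] at hx
    obtain ⟨i, hi, rfl⟩ := hx
    exact Finset.mem_image_of_mem v
      (by rw [hS₁, Finset.mem_filter]; exact ⟨Finset.mem_univ i, hi⟩)
  have hdisj : Disjoint S₁ S₂ := by
    rw [Finset.disjoint_left]
    intro i hi1 hi2
    have h0 : pairL b (v i) = 0 := hborth _ (Submodule.subset_span (hS₂_mem i hi2))
    rw [hS₁, Finset.mem_filter] at hi1
    exact hi1.2 h0
  have hNbound : S₁.card + S₂.card ≤ N := by
    rw [← Finset.card_union_of_disjoint hdisj]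
    have h1 := Finset.card_le_card (Finset.subset_univ (S₁ ∪ S₂))
    simpa using h1
  have hG1 : 2 * K - 1 ≤ N := by omega
  -- second bound
  have hG2 : min (2 * K + (K - 2) / (h - 1)) (q + 1) ≤ N := by
    by_contra hcon
    push_neg at hcon
    obtain ⟨hlt1, hlt2⟩ := lt_min_iff.mp hcon
    set m := S₁.card with hm
    set W : ↥S₁ → Submodule Fq FL := fun i => Submodule.span Fq {pairL b (v i.1)} with hW
    set Φ : (Fin K → FL) →ₗ[Fq] (∀ i : ↥S₁, FL ⧸ W i) :=
      LinearMap.pi (fun i => (W i).mkQ ∘ₗ ((pairL (v i.1)).restrictScalars Fq)) with hΦ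
    set A₀ := LinearMap.ker Φ with hA₀
    have hmemA₀ : ∀ x : Fin K → FL, x ∈ A₀ ↔ ∀ i : ↥S₁, pairL (v i.1) x ∈ W i := by
      intro x
      rw [hA₀, LinearMap.mem_ker]
      constructor
      · intro h0 i
        have h1 : Φ x i = 0 := by rw [h0]; rfl
        rwa [hΦ, LinearMap.pi_apply, LinearMap.comp_apply, Submodule.mkQ_apply,
          Submodule.Quotient.mk_eq_zero, LinearMap.coe_restrictScalars] at h1
      · intro h0
        funext i
        rw [hΦ, LinearMap.pi_apply, LinearMap.comp_apply, Submodule.mkQ_apply]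
        rw [show ((0 : ∀ i : ↥S₁, FL ⧸ W i) i) = 0 from rfl]
        rw [Submodule.Quotient.mk_eq_zero, LinearMap.coe_restrictScalars]
        exact h0 i
    have hbA₀ : b ∈ A₀ := by
      rw [hmemA₀]
      intro i
      show pairL (v i.1) b ∈ Submodule.span Fq {pairL b (v i.1)}
      rw [pairL_comm]
      exact Submodule.mem_span_singleton_self _
    have hβS₁ : ∀ i ∈ S₁, pairL b (v i) ≠ 0 := by
      intro i hi
      rw [hS₁, Finset.mem_filter] at hi
      exact hi.2
    have hfrq : ∀ i : ↥S₁, finrank Fq (FL ⧸ W i) = h - 1 := by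
      intro i
      have h1 := Submodule.finrank_quotient_add_finrank (W i)
      have h2 : finrank Fq ↥(W i) = 1 :=
        finrank_span_singleton (hβS₁ i.1 i.2)
      rw [h2, hfrL] at h1
      omega
    have hrange : finrank Fq (LinearMap.range Φ) ≤ m * (h - 1) := by
      have h1 : finrank Fq (LinearMap.range Φ) ≤ finrank Fq (∀ i : ↥S₁, FL ⧸ W i) :=
        Submodule.finrank_le _
      have h2 : finrank Fq (∀ i : ↥S₁, FL ⧸ W i) = ∑ i : ↥S₁, finrank Fq (FL ⧸ W i) :=
        Module.finrank_pi_fintype Fq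
      have h3 : ∑ i : ↥S₁, finrank Fq (FL ⧸ W i) = m * (h - 1) := by
        rw [Finset.sum_congr rfl (fun i _ => hfrq i), Finset.sum_const, smul_eq_mul,
          Finset.card_univ, Fintype.card_coe]
      rw [h2, h3] at h1
      exact h1
    have hd2 : 2 ≤ finrank Fq ↥A₀ := by
      have h1 := LinearMap.finrank_range_add_finrank_ker Φ
      rw [hdim, ← hA₀] at h1
      have hmle : m ≤ K + (K - 2) / (h - 1) := by omega
      have he : (K - 2) / (h - 1) * (h - 1) ≤ K - 2 := Nat.div_mul_le_self _ _
      have hp1 : m * (h - 1) ≤ (K + (K - 2) / (h - 1)) * (h - 1) :=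
        Nat.mul_le_mul_right _ hmle
      have hp2 : (K + (K - 2) / (h - 1)) * (h - 1)
          = K * (h - 1) + (K - 2) / (h - 1) * (h - 1) := add_mul _ _ _
      have hp3 : K * h = K * (h - 1) + K := by
        conv_lhs => rw [show h = (h - 1) + 1 by omega]
        rw [mul_add, mul_one]
      omega
    set Zb : Submodule Fq ↥A₀ := Submodule.comap A₀.subtype (Submodule.span Fq {b}) with hZb
    set Zi : Fin N → Submodule Fq ↥A₀ := fun i =>
      LinearMap.ker (((pairL (v i)).restrictScalars Fq) ∘ₗ A₀.subtype) with hZi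
    set T : Finset (Option (Fin N)) := insert none (S₁.image some) with hT
    set Z : Option (Fin N) → Submodule Fq ↥A₀ := fun o => o.elim Zb Zi with hZfun
    have hTcard : T.card ≤ q := by
      have h1 : T.card ≤ (S₁.image some).card + 1 := by
        rw [hT]; exact Finset.card_insert_le _ _
      have h2 : (S₁.image some).card ≤ m := Finset.card_image_le
      omega
    have hZne : ∀ o ∈ T, Z o ≠ ⊤ := by
      intro o ho
      rw [hT, Finset.mem_insert] at ho
      rcases ho with rfl | hsome
      · intro htop
        have hfr1 : finrank Fq ↥Zb ≤ 1 := by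
          have e := Submodule.equivMapOfInjective A₀.subtype A₀.injective_subtype Zb
          rw [e.finrank_eq]
          refine le_trans (Submodule.finrank_mono (Submodule.map_comap_le _ _)) ?_
          rw [finrank_span_singleton hb0]
        have htop' : Zb = ⊤ := htop
        rw [htop', finrank_top] at hfr1
        omega
      · obtain ⟨i, hiS₁, rfl⟩ := Finset.mem_image.mp hsome
        intro htop
        have hmem : (⟨b, hbA₀⟩ : ↥A₀) ∈ Zi i := by
          have h1 : (⟨b, hbA₀⟩ : ↥A₀) ∈ Z (some i) := by rw [htop]; exact Submodule.mem_top
          exact h1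
        rw [hZi, LinearMap.mem_ker, LinearMap.comp_apply] at hmem
        simp only [Submodule.coe_subtype, LinearMap.coe_restrictScalars] at hmem
        exact hβS₁ i hiS₁ (by rw [pairL_comm]; exact hmem)
    obtain ⟨a, ha⟩ := avoid_union hq1 hcard_q T Z hZne hTcard
    have hanb : (a : Fin K → FL) ∉ Submodule.span Fq {b} := by
      have h1 := ha none (by rw [hT]; exact Finset.mem_insert_self _ _)
      intro hmem
      apply h1
      show a ∈ Zb
      rw [hZb, Submodule.mem_comap]
      simpa using hmem
    have hane : (a : Fin K → FL) ≠ 0 := by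
      intro h0
      apply hanb
      rw [h0]
      exact Submodule.zero_mem _
    have haSi : ∀ i ∈ S₁, pairL (v i) (a : Fin K → FL) ≠ 0 := by
      intro i hi h0
      have hz := ha (some i)
        (by rw [hT]; exact Finset.mem_insert_of_mem (Finset.mem_image_of_mem _ hi))
      apply hz
      show a ∈ Zi i
      rw [hZi, LinearMap.mem_ker, LinearMap.comp_apply]
      simpa using h0
    have haW : ∀ i : ↥S₁,
        pairL (v i.1) (a : Fin K → FL) ∈ Submodule.span Fq {pairL b (v i.1)} := by
      intro i
      have h1 := (hmemA₀ (a : Fin K → FL)).mp a.2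
      exact h1 i
    have hcex : ∀ i : Fin N, ∃ ci : Fq,
        pairL b (v i) = ci • pairL (a : Fin K → FL) (v i) := by
      intro i
      by_cases hi : i ∈ S₁
      · obtain ⟨r, hr⟩ := Submodule.mem_span_singleton.mp (haW ⟨i, hi⟩)
        have hrne : r ≠ 0 := by
          intro h0
          rw [h0, zero_smul] at hr
          exact haSi i hi hr.symm
        refine ⟨r⁻¹, ?_⟩
        rw [← pairL_comm (v i) (a : Fin K → FL), ← hr, smul_smul,
          inv_mul_cancel₀ hrne, one_smul]
      · refine ⟨0, ?_⟩
        rw [zero_smul]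
        by_contra hne
        exact hi (by rw [hS₁]; exact Finset.mem_filter.mpr ⟨Finset.mem_univ _, hne⟩)
    choose c hc using hcex
    obtain ⟨c₀, hbc⟩ := dual_key v hSBS hdim lam hlam (a : Fin K → FL) b hane c hc
    have hc₀ : c₀ ≠ 0 := by
      intro h0
      rw [h0, zero_smul] at hbc
      exact hb0 hbc
    apply hanb
    rw [Submodule.mem_span_singleton]
    exact ⟨c₀⁻¹, by rw [hbc, smul_smul, inv_mul_cancel₀ hc₀, one_smul]⟩
  exact max_le hG2 hG1
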